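/- Let r > 0 and Σ⁻¹ = I + (1/r)·Σ_{t=1}^{T} x_t x_tᵀ where each ‖x_t‖ ≤ 1. Then ln det(Σ⁻¹) ≤ d·ln(1 + T/(rd)). -/

import Mathlib

open Matrix

lemma aux_trace_eq_sum_eigenvalues {n : Type*} [Fintype n] [DecidableEq n]
    {A : Matrix n n ℝ} (hA : A.IsHermitian) :
    A.trace = ∑ i, hA.eigenvalues i := by
  nth_rewrite 1 [hA.spectral_theorem]
  rw [Unitary.conjStarAlgAut_apply]
  rw [Matrix.trace_mul_cycle,
    show (star (hA.eigenvectorUnitary : Matrix n n ℝ)) * (hA.eigenvectorUnitary : Matrix n n ℝ) = 1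
      from Unitary.coe_star_mul_self _, one_mul]
  simp [Matrix.trace_diagonal]

lemma aux_smul_posSemidef {n : Type*} [Fintype n]
    {A : Matrix n n ℝ} (hA : A.PosSemidef) {c : ℝ} (hc : 0 ≤ c) :
    (c • A).PosSemidef := by
  refine ⟨?_, fun v => ?_⟩
  · unfold Matrix.IsHermitian
    rw [Matrix.conjTranspose_smul, hA.1]
    simp
  · exact (hA.smul hc).2 v

lemma aux_vecMulVec_posSemidef {n : Type*} [Fintype n] (y : n → ℝ) :
    (vecMulVec y y).PosSemidef := by
  rw [Matrix.vecMulVec_eq Unit]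
  have h : Matrix.replicateRow Unit y = (Matrix.replicateCol Unit y)ᴴ := by
    ext i j; simp [Matrix.replicateRow, Matrix.replicateCol]
  rw [h]
  exact Matrix.posSemidef_self_mul_conjTranspose _

/-- If Σ⁻¹ = I + (1/r)·Σ_t x_t x_tᵀ with ‖x_t‖ ≤ 1, then
ln det(Σ⁻¹) ≤ d·ln(1 + T/(rd)). -/
theorem stmt_13 (d T : ℕ) (r : ℝ) (hr : 0 < r)
    (x : ℕ → Fin d → ℝ) (hx : ∀ t, ∑ i, (x t i) ^ 2 ≤ 1)
    (M : Matrix (Fin d) (Fin d) ℝ)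
    (hM : M = (1 : Matrix (Fin d) (Fin d) ℝ)
            + (1 / r) • ∑ t ∈ Finset.Icc 1 T, vecMulVec (x t) (x t)) :
    Real.log M.det ≤ (d : ℝ) * Real.log (1 + (T : ℝ) / (r * d)) := by
  rcases Nat.eq_zero_or_pos d with hd | hd
  · subst hd
    simp [Matrix.det_isEmpty]
  have hd' : (0 : ℝ) < d := by exact_mod_cast hd
  -- positivity of M
  have hSsum : (∑ t ∈ Finset.Icc 1 T, vecMulVec (x t) (x t)).PosSemidef := by
    apply Finset.sum_induction (fun t => vecMulVec (x t) (x t))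
      (fun A : Matrix (Fin d) (Fin d) ℝ => A.PosSemidef)
      (fun a b ha hb => ha.add hb) Matrix.PosSemidef.zero
    intro t _
    exact aux_vecMulVec_posSemidef (x t)
  have hMP : M.PosDef := by
    rw [hM]
    exact Matrix.PosDef.one.add_posSemidef
      (aux_smul_posSemidef hSsum (by positivity))
  have hH : M.IsHermitian := hMP.isHermitian
  -- trace bound
  have htr : M.trace ≤ d + T / r := by
    rw [hM, Matrix.trace_add, Matrix.trace_smul, Matrix.trace_sum, Matrix.trace_one]
    have h1 : ∀ t, (vecMulVec (x t) (x t)).trace ≤ 1 := by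
      intro t
      rw [Matrix.trace]
      simpa [Matrix.diag, vecMulVec, sq] using hx t
    have h2 : ∑ t ∈ Finset.Icc 1 T, (vecMulVec (x t) (x t)).trace ≤ (T : ℝ) := by
      calc ∑ t ∈ Finset.Icc 1 T, (vecMulVec (x t) (x t)).trace
          ≤ ∑ _t ∈ Finset.Icc 1 T, (1 : ℝ) := Finset.sum_le_sum (fun t _ => h1 t)
        _ = (T : ℝ) := by simp
    have : (1 / r) • ∑ t ∈ Finset.Icc 1 T, (vecMulVec (x t) (x t)).trace ≤ T / r := by
      rw [smul_eq_mul]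
      calc (1 / r) * ∑ t ∈ Finset.Icc 1 T, (vecMulVec (x t) (x t)).trace
          ≤ (1 / r) * T := by
            apply mul_le_mul_of_nonneg_left h2 (by positivity)
        _ = T / r := by ring
    simpa [Fintype.card_fin] using add_le_add_left this (d : ℝ)
  -- eigenvalues
  set lam := hH.eigenvalues with hlam
  have hlampos : ∀ i, 0 < lam i := fun i => hMP.eigenvalues_pos i
  have hdet : M.det = ∏ i, lam i := by
    simpa using hH.det_eq_prod_eigenvalues
  have htr' : M.trace = ∑ i, lam i := aux_trace_eq_sum_eigenvalues hH
  -- AM-GM: ∏ lam ≤ (trace/d)^d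
  have hamgm : ∏ i, (lam i) ^ ((1 : ℝ) / d) ≤ ∑ i, (1 / (d : ℝ)) * lam i := by
    apply Real.geom_mean_le_arith_mean_weighted
    · intro i _; positivity
    · simp [Finset.card_fin]
      field_simp
    · intro i _; exact (hlampos i).le
  have hmean : ∑ i, (1 / (d : ℝ)) * lam i = M.trace / d := by
    rw [htr', ← Finset.mul_sum]
    ring
  have hmeanpos : 0 < M.trace / d := by
    rw [htr']
    have : 0 < ∑ i, lam i := Finset.sum_pos (fun i _ => hlampos i) ⟨⟨0, hd⟩, Finset.mem_univ _⟩
    positivity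
  have hkey : M.det ≤ (M.trace / d) ^ (d : ℕ) := by
    have h1 : ∏ i, (lam i) ^ ((1 : ℝ) / d) = (∏ i, lam i) ^ ((1 : ℝ) / d) := by
      rw [← Real.finset_prod_rpow _ _ (fun i _ => (hlampos i).le)]
    have hprodpos : 0 < ∏ i, lam i := Finset.prod_pos (fun i _ => hlampos i)
    have h2 : (∏ i, lam i) ^ ((1 : ℝ) / d) ≤ M.trace / d := by
      rw [h1, hmean] at hamgm; exact hamgm
    have h3 := Real.rpow_le_rpow (Real.rpow_nonneg hprodpos.le _) h2 hd'.le
    rw [← Real.rpow_mul hprodpos.le] at h3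
    have hmul : (1 : ℝ) / d * d = 1 := by field_simp
    rw [hmul, Real.rpow_one] at h3
    calc M.det = ∏ i, lam i := hdet
      _ ≤ (M.trace / d) ^ (d : ℝ) := h3
      _ = (M.trace / d) ^ (d : ℕ) := Real.rpow_natCast _ d
  -- conclude
  have hbound : M.trace / d ≤ 1 + (T : ℝ) / (r * d) := by
    rw [div_le_iff₀ hd']
    calc M.trace ≤ d + T / r := htr
      _ = (1 + (T : ℝ) / (r * d)) * d := by field_simp
  have hdetpos : 0 < M.det := hMP.det_pos
  calc Real.log M.det ≤ Real.log ((M.trace / d) ^ (d : ℕ)) :=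
        Real.log_le_log hdetpos hkey
    _ = (d : ℝ) * Real.log (M.trace / d) := by
        rw [Real.log_pow]
    _ ≤ (d : ℝ) * Real.log (1 + (T : ℝ) / (r * d)) := by
        apply mul_le_mul_of_nonneg_left _ (le_of_lt hd')
        exact Real.log_le_log hmeanpos hbound
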